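/- For every commutative ring R, all elements y, a ∈ R, and every integer r ≥ 1, one has Σ_{l,m,k ≥ 0, l+m+k = r} (−1)^l · c(l, k) · k! · binom(l+m, l) · binom(l+m+k, k) · a^k · (∏_{j=0}^{l-1}(y − j·a)) · (∏_{i=0}^{m-1}(y − i·a)) = 0 in R. -/

import Mathlib

/-- `cCoeff s k` is the coefficient of `X^k` in `(1+X)^{-s} ∈ ℤ[[X]]`:
`c(s,k) = (-1)^k * choose (s+k-1) k` for `s ≥ 1`, `c(0,0) = 1`, `c(0,k) = 0` for `k ≥ 1`. -/
def cCoeff (s k : ℕ) : ℤ :=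
  if s = 0 then (if k = 0 then 1 else 0) else (-1) ^ k * ((s + k - 1).choose k : ℤ)

open Finset Nat

lemma cCoeff_eq (l k : ℕ) : cCoeff l k = (-1) ^ k * ((l + k - 1).choose k : ℤ) := by
  unfold cCoeff
  rcases Nat.eq_zero_or_pos l with hl | hl
  · subst hl
    rcases Nat.eq_zero_or_pos k with hk | hk
    · simp [hk]
    · simp only [if_pos rfl, if_neg (Nat.pos_iff_ne_zero.mp hk), zero_add]
      rw [Nat.choose_eq_zero_of_lt (by omega)]
      simp
  · rw [if_neg (by omega)]

lemma nat_tri (l m k : ℕ) :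
    (l + m).choose l * (l + m + k).choose k = (l + m + k).choose (l + k) * (l + k).choose k := by
  have h : ((l + m).choose l * (l + m + k).choose k : ℚ)
      = ((l + m + k).choose (l + k) * (l + k).choose k : ℚ) := by
    have h1 : ((l + m).choose l : ℚ) = (l + m)! / (l ! * m !) := by
      rw [Nat.cast_choose ℚ (by omega : l ≤ l + m), show l + m - l = m by omega]
    have h2 : ((l + m + k).choose k : ℚ) = (l + m + k)! / (k ! * (l + m)!) := by
      rw [Nat.cast_choose ℚ (by omega : k ≤ l + m + k), show l + m + k - k = l + m by omega]
    have h3 : ((l + m + k).choose (l + k) : ℚ) = (l + m + k)! / ((l + k)! * m !) := by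
      rw [Nat.cast_choose ℚ (by omega : l + k ≤ l + m + k),
        show l + m + k - (l + k) = m by omega]
    have h4 : ((l + k).choose k : ℚ) = (l + k)! / (k ! * l !) := by
      rw [Nat.cast_choose ℚ (by omega : k ≤ l + k), show l + k - k = l by omega]
    rw [h1, h2, h3, h4]
    have f : ∀ n : ℕ, ((n ! : ℚ)) ≠ 0 := fun n => Nat.cast_ne_zero.2 (Nat.factorial_ne_zero n)
    field_simp
  exact_mod_cast h

lemma vand {R : Type*} [CommRing R] (x z a : R) :
    ∀ r : ℕ, ∏ i ∈ range r, (x + z - (i : R) * a) =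
      ∑ n ∈ range (r + 1), (r.choose n) •
        ((∏ i ∈ range n, (x - (i : R) * a)) * ∏ j ∈ range (r - n), (z - (j : R) * a)) := by
  intro r
  induction r with
  | zero => simp
  | succ r ih =>
    rw [prod_range_succ, ih]
    have key : ∀ n ∈ range (r + 1),
        (r.choose n) • ((∏ i ∈ range n, (x - (i : R) * a)) * ∏ j ∈ range (r - n), (z - (j : R) * a))
          * (x + z - (r : R) * a)
        = (r.choose n) • ((∏ i ∈ range (n + 1), (x - (i : R) * a)) * ∏ j ∈ range (r - n), (z - (j : R) * a))
          + (r.choose n) • ((∏ i ∈ range n, (x - (i : R) * a)) * ∏ j ∈ range (r + 1 - n), (z - (j : R) * a)) := by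
      intro n hn
      rw [mem_range] at hn
      have hn' : n ≤ r := by omega
      rw [prod_range_succ, show r + 1 - n = (r - n) + 1 by omega, prod_range_succ]
      have hc : ((r - n : ℕ) : R) = (r : R) - (n : R) := by
        rw [Nat.cast_sub hn']
      simp only [smul_mul_assoc, ← smul_add, hc]
      congr 1
      ring
    rw [Finset.sum_mul, Finset.sum_congr rfl key, Finset.sum_add_distrib]
    rw [Finset.sum_range_succ' (fun n => ((r+1).choose n) •
        ((∏ i ∈ range n, (x - (i : R) * a)) * ∏ j ∈ range (r + 1 - n), (z - (j : R) * a)))]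
    have e1 : ∀ n ∈ range (r + 1), ((r+1).choose (n+1)) •
        ((∏ i ∈ range (n+1), (x - (i : R) * a)) * ∏ j ∈ range (r + 1 - (n+1)), (z - (j : R) * a))
        = (r.choose n) • ((∏ i ∈ range (n+1), (x - (i : R) * a)) * ∏ j ∈ range (r - n), (z - (j : R) * a))
        + (r.choose (n+1)) • ((∏ i ∈ range (n+1), (x - (i : R) * a)) * ∏ j ∈ range (r - n), (z - (j : R) * a)) := by
      intro n hn
      rw [Nat.choose_succ_succ, add_smul, Nat.succ_sub_succ]
    rw [Finset.sum_congr rfl e1, Finset.sum_add_distrib]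
    have hBC : (∑ n ∈ range (r + 1), (r.choose (n+1)) •
          ((∏ i ∈ range (n+1), (x - (i : R) * a)) * ∏ j ∈ range (r - n), (z - (j : R) * a)))
        + ((r+1).choose 0) • ((∏ i ∈ range 0, (x - (i : R) * a)) * ∏ j ∈ range (r + 1 - 0), (z - (j : R) * a))
        = ∑ n ∈ range (r + 1), (r.choose n) •
          ((∏ i ∈ range n, (x - (i : R) * a)) * ∏ j ∈ range (r + 1 - n), (z - (j : R) * a)) := by
      rw [Finset.sum_range_succ (fun n => (r.choose (n+1)) •
          ((∏ i ∈ range (n+1), (x - (i : R) * a)) * ∏ j ∈ range (r - n), (z - (j : R) * a)))]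
      rw [Finset.sum_range_succ' (fun n => (r.choose n) •
          ((∏ i ∈ range n, (x - (i : R) * a)) * ∏ j ∈ range (r + 1 - n), (z - (j : R) * a)))]
      simp [Nat.succ_sub_succ, Nat.choose_succ_self]
    rw [← hBC]
    ring

lemma lemA {R : Type*} [CommRing R] (y a : R) (n : ℕ) :
    ∏ i ∈ range n, (y + (i : R) * a) =
      ∑ l ∈ range (n + 1), (n.choose (n - l) * (n - 1).descFactorial (n - l)) •
        (a ^ (n - l) * ∏ t ∈ range l, (y - (t : R) * a)) := by
  have h := vand y (((n - 1 : ℕ) : R) * a) a n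
  have L : ∏ i ∈ range n, (y + ((n - 1 : ℕ) : R) * a - (i : R) * a)
      = ∏ i ∈ range n, (y + (i : R) * a) := by
    rw [← Finset.prod_range_reflect (fun i => y + (i : R) * a) n]
    refine Finset.prod_congr rfl fun j hj => ?_
    rw [mem_range] at hj
    show y + ((n - 1 : ℕ) : R) * a - (j : R) * a = y + ((n - 1 - j : ℕ) : R) * a
    rw [Nat.cast_sub (by omega : j ≤ n - 1)]
    ring
  rw [← L, h]
  refine Finset.sum_congr rfl fun l hl => ?_
  rw [mem_range] at hl
  have P : ∏ j ∈ range (n - l), (((n - 1 : ℕ) : R) * a - (j : R) * a)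
      = ((n - 1).descFactorial (n - l) : R) * a ^ (n - l) := by
    have e : ∀ j ∈ range (n - l), ((n - 1 : ℕ) : R) * a - (j : R) * a
        = ((n - 1 - j : ℕ) : R) * a := by
      intro j hj
      rw [mem_range] at hj
      rw [Nat.cast_sub (by omega : j ≤ n - 1)]
      ring
    rw [Finset.prod_congr rfl e, Finset.prod_mul_distrib, Finset.prod_const, Finset.card_range,
      ← Nat.cast_prod, ← Nat.descFactorial_eq_prod_range]
  rw [P, Nat.choose_symm (by omega : l ≤ n)]
  simp only [nsmul_eq_mul]
  push_cast
  ring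

/-- the coefficientwise form of `(1+aX)^{Y/a} · (1+aX)^{-Y/a} = 1`. -/
theorem statement1 {R : Type*} [CommRing R] (y a : R) (r : ℕ) (hr : 1 ≤ r) :
    ∑ l ∈ Finset.range (r + 1), ∑ m ∈ Finset.range (r + 1 - l),
      ((-1 : ℤ) ^ l * cCoeff l (r - l - m) * ((r - l - m).factorial : ℤ) *
          ((l + m).choose l : ℤ) * ((l + m + (r - l - m)).choose (r - l - m) : ℤ)) •
        (a ^ (r - l - m) *
          (∏ t ∈ Finset.range l, (y - (t : R) * a)) *
          (∏ i ∈ Finset.range m, (y - (i : R) * a))) = 0 := by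
  rw [Finset.sum_comm' (t' := range (r + 1)) (s' := fun m => range (r + 1 - m))
    (fun l m => by simp only [mem_range]; omega)]
  have step1 : ∀ m ∈ range (r + 1),
      (∑ l ∈ Finset.range (r + 1 - m),
        ((-1 : ℤ) ^ l * cCoeff l (r - l - m) * ((r - l - m).factorial : ℤ) *
            ((l + m).choose l : ℤ) * ((l + m + (r - l - m)).choose (r - l - m) : ℤ)) •
          (a ^ (r - l - m) *
            (∏ t ∈ Finset.range l, (y - (t : R) * a)) *
            (∏ i ∈ Finset.range m, (y - (i : R) * a))))
      = ((-1 : ℤ) ^ (r - m) * (r.choose (r - m) : ℤ)) •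
          ((∏ i ∈ range (r - m), (y + (i : R) * a)) *
            ∏ i ∈ Finset.range m, (y - (i : R) * a)) := by
    intro m hm
    rw [mem_range] at hm
    set n := r - m with hn
    have hrm : r + 1 - m = n + 1 := by omega
    rw [hrm, lemA y a n, Finset.sum_mul, Finset.smul_sum]
    refine Finset.sum_congr rfl fun l hl => ?_
    rw [mem_range] at hl
    rw [show l + m + (r - l - m) = r by omega]
    rw [show r - l - m = n - l by omega]
    have hnl : l + (n - l) = n := by omega
    have tri := nat_tri l m (n - l)
    rw [show l + m + (n - l) = r by omega, hnl] at tri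
    have hsign : (-1 : R) ^ l * (-1 : R) ^ (n - l) = (-1 : R) ^ n := by
      rw [← pow_add, hnl]
    have triR : (((l + m).choose l : ℕ) : R) * ((r.choose (n - l) : ℕ) : R)
        = ((r.choose n : ℕ) : R) * ((n.choose (n - l) : ℕ) : R) := by
      have h := congrArg (fun x : ℕ => (x : R)) tri
      push_cast at h
      exact h
    have hdesc : (n - 1).descFactorial (n - l) = (n - l).factorial * (n - 1).choose (n - l) :=
      Nat.descFactorial_eq_factorial_mul_choose _ _
    rw [cCoeff_eq l (n - l), show l + (n - l) - 1 = n - 1 by omega]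
    simp only [zsmul_eq_mul, nsmul_eq_mul, hdesc]
    push_cast
    rw [← hsign]
    linear_combination ((-1 : R) ^ l * (-1 : R) ^ (n - l) * (((n - 1).choose (n - l) : ℕ) : R) *
      (((n - l).factorial : ℕ) : R) *
      (a ^ (n - l) * (∏ t ∈ range l, (y - (t : R) * a)) * ∏ i ∈ range m, (y - (i : R) * a))) * triR
  rw [Finset.sum_congr rfl step1]
  have step2 : ∀ m ∈ range (r + 1),
      ((-1 : ℤ) ^ (r - m) * (r.choose (r - m) : ℤ)) •
          ((∏ i ∈ range (r - m), (y + (i : R) * a)) *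
            ∏ i ∈ Finset.range m, (y - (i : R) * a))
      = (r.choose (r - m)) •
          ((∏ i ∈ range (r - m), (-y - (i : R) * a)) *
            ∏ i ∈ Finset.range (r - (r - m)), (y - (i : R) * a)) := by
    intro m hm
    rw [mem_range] at hm
    rw [show r - (r - m) = m by omega]
    have neg : ∏ i ∈ range (r - m), (-y - (i : R) * a)
        = (-1 : R) ^ (r - m) * ∏ i ∈ range (r - m), (y + (i : R) * a) := by
      have e : ∀ i ∈ range (r - m), -y - (i : R) * a = (-1 : R) * (y + (i : R) * a) := by
        intro i _; ring
      rw [Finset.prod_congr rfl e, Finset.prod_mul_distrib, Finset.prod_const, Finset.card_range]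
    rw [neg]
    simp only [zsmul_eq_mul, nsmul_eq_mul]
    push_cast
    ring
  rw [Finset.sum_congr rfl step2]
  have hrefl := Finset.sum_range_reflect (fun j => (r.choose j) •
      ((∏ i ∈ range j, (-y - (i : R) * a)) * ∏ i ∈ Finset.range (r - j), (y - (i : R) * a))) (r + 1)
  simp only [Nat.add_sub_cancel] at hrefl
  rw [hrefl]
  have hv := vand (-y) y a r
  have hz : ∏ i ∈ range r, (-y + y - (i : R) * a) = 0 :=
    Finset.prod_eq_zero (mem_range.mpr (by omega : 0 < r)) (by simp)
  rw [← hz, hv]
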